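/- In the real Clifford algebra Cl(7,0), the element ρ = (3·e1234567 + θ64)/4, where θ64 = e123 + e145 + e167 + e246 - e257 - e347 - e356, satisfies ρ² = -1. -/

import Mathlib

set_option maxHeartbeats 2000000

noncomputable def Q7 : QuadraticForm ℝ (Fin 7 → ℝ) :=
  QuadraticMap.weightedSumSquares ℝ (fun _ : Fin 7 => (1 : ℝ))

noncomputable def e7 (i : Fin 7) : CliffordAlgebra Q7 :=
  CliffordAlgebra.ι Q7 (Pi.single i 1)

/-- Product of generators with the given (0-based) indices. -/
noncomputable def p7 (l : List (Fin 7)) : CliffordAlgebra Q7 := (l.map e7).prod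

/-- θ64 = e123 + e145 + e167 + e246 - e257 - e347 - e356 (1-based indices). -/
noncomputable def θ64 : CliffordAlgebra Q7 :=
  p7 [0,1,2] + p7 [0,3,4] + p7 [0,5,6] + p7 [1,3,5] - p7 [1,4,6] - p7 [2,3,6] - p7 [2,4,5]

lemma e_sq (i : Fin 7) : e7 i * e7 i = 1 := by
  rw [e7, CliffordAlgebra.ι_sq_scalar]
  simp [Q7, QuadraticMap.weightedSumSquares_apply, Pi.single_apply, Finset.sum_ite_eq']
  exact (algebraMap ℝ (CliffordAlgebra Q7)).map_one

lemma e_anticomm {i j : Fin 7} (h : i ≠ j) : e7 i * e7 j = -(e7 j * e7 i) := by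
  have key := CliffordAlgebra.ι_mul_ι_add_swap (Q := Q7) (Pi.single i 1) (Pi.single j 1)
  have hp : QuadraticMap.polar Q7 (Pi.single i (1:ℝ)) (Pi.single j 1) = 0 := by
    simp [QuadraticMap.polar, Q7, QuadraticMap.weightedSumSquares_apply, Pi.single_apply]
    ring_nf; simp [Finset.sum_add_distrib, Finset.sum_ite_eq', h.symm]; norm_num
  rw [hp, map_zero] at key
  rw [e7, e7]
  linear_combination (norm := noncomm_ring) key

lemma e_sq_mul (i : Fin 7) (x : CliffordAlgebra Q7) : e7 i * (e7 i * x) = x := by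
  rw [← mul_assoc, e_sq, one_mul]

lemma e_swap_mul {i j : Fin 7} (h : j < i) (x : CliffordAlgebra Q7) :
    e7 i * (e7 j * x) = -(e7 j * (e7 i * x)) := by
  rw [← mul_assoc, e_anticomm (ne_of_gt h), neg_mul, mul_assoc]

lemma e_swap {i j : Fin 7} (h : j < i) : e7 i * e7 j = -(e7 j * e7 i) :=
  e_anticomm (ne_of_gt h)

/-- ρ = (3·e1234567 + θ64)/4 satisfies ρ² = -1. -/
theorem stmt13 :
    ((4 : ℝ)⁻¹ • (3 * p7 [0,1,2,3,4,5,6] + θ64)) ^ 2 = -1 := by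
  have key : (3 * p7 [0,1,2,3,4,5,6] + θ64) * (3 * p7 [0,1,2,3,4,5,6] + θ64)
      = -16 := by
    have h3 : (3 : CliffordAlgebra Q7) * p7 [0,1,2,3,4,5,6]
        = p7 [0,1,2,3,4,5,6] + p7 [0,1,2,3,4,5,6] + p7 [0,1,2,3,4,5,6] := by
      noncomm_ring
    rw [h3, θ64]
    simp only [p7, List.map_cons, List.map_nil, List.prod_cons, List.prod_nil, mul_one]
    simp only [sub_eq_add_neg, mul_add, add_mul, neg_mul, mul_neg, neg_neg, mul_assoc]
    simp (config := { decide := true }) only [e_sq_mul, e_sq, e_swap_mul, e_swap,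
      mul_neg, neg_neg, mul_one]
    abel_nf
    norm_num
  have key2 : (3 * p7 [0,1,2,3,4,5,6] + θ64) ^ 2 = -16 := by rw [sq, key]
  rw [smul_pow, key2]
  rw [show ((-16 : CliffordAlgebra Q7)) = ((-16 : ℝ)) • (1 : CliffordAlgebra Q7) by
    simp [Algebra.smul_def, map_ofNat], smul_smul]
  norm_num
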